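/- For every constant C≥1 there exists n₀ such that the following holds whenever ℓ,n≥n₀. Let s_a≥1 (a∈S) and t_v≥1 (v∈T) be integers with m := ∑_{a∈S}s_a = ∑_{v∈T}t_v, and let F⊆{av: a∈S, v∈T} be a set of forbidden pairs such that no element of S∪T lies in more than C pairs of F. Set Δ_S=max_{a∈S}s_a and Δ_T=max_{v∈T}t_v. If Δ_S ≤ √m/2 − C and Δ_T ≤ √m/2 − C, then there exists a simple bipartite graph with bipartition (S,T) in which every a∈S has degree s_a and every v∈T has degree t_v, and which contains no edge in F. -/

import Mathlib

open Finset

/-- Realisability of a bipartite degree sequence avoiding a bounded set of forbidden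
edges, case (b): `Δ_S, Δ_T ≤ √m/2 - C`. -/
theorem stmt_12 (C : ℝ) (hC : 1 ≤ C) :
    ∃ n₀ : ℕ, ∀ ℓ n : ℕ, n₀ ≤ ℓ → n₀ ≤ n →
      ∀ (s : Fin ℓ → ℕ) (t : Fin n → ℕ) (F : Finset (Fin ℓ × Fin n)) (m : ℕ),
        (∀ a, 1 ≤ s a) → (∀ v, 1 ≤ t v) →
        (∑ a, s a) = m → (∑ v, t v) = m →
        (∀ a : Fin ℓ, ((F.filter (fun p => p.1 = a)).card : ℝ) ≤ C) →
        (∀ v : Fin n, ((F.filter (fun p => p.2 = v)).card : ℝ) ≤ C) →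
        (((Finset.univ.sup s : ℕ) : ℝ) ≤ Real.sqrt m / 2 - C) →
        (((Finset.univ.sup t : ℕ) : ℝ) ≤ Real.sqrt m / 2 - C) →
        ∃ E : Finset (Fin ℓ × Fin n),
          (∀ p ∈ E, p ∉ F) ∧
          (∀ a : Fin ℓ, (E.filter (fun p => p.1 = a)).card = s a) ∧
          (∀ v : Fin n, (E.filter (fun p => p.2 = v)).card = t v) := by
  classical
  refine ⟨1, fun ℓ n hℓ hn s t F m hs ht hsm htm hFa hFv hDS hDT => ?_⟩
  set ΔS := Finset.univ.sup s with hΔSdef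
  set ΔT := Finset.univ.sup t with hΔTdef
  have hsΔS : ∀ a, s a ≤ ΔS := fun a => Finset.le_sup (mem_univ a)
  have htΔT : ∀ v, t v ≤ ΔT := fun v => Finset.le_sup (mem_univ v)
  have hm0 : 0 < m := by
    have h1 : (ℓ : ℕ) ≤ ∑ a, s a := by
      calc (ℓ : ℕ) = ∑ _a : Fin ℓ, 1 := by simp
        _ ≤ ∑ a, s a := Finset.sum_le_sum fun a _ => hs a
    omega
  -- real arithmetic facts
  have hsqrt : Real.sqrt m * Real.sqrt m = m := Real.mul_self_sqrt (by positivity)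
  have hS2 : (ΔS : ℝ) + C ≤ Real.sqrt m / 2 := by linarith
  have hT2 : (ΔT : ℝ) + C ≤ Real.sqrt m / 2 := by linarith
  have hSnn : (0 : ℝ) ≤ (ΔS : ℝ) := Nat.cast_nonneg _
  have hTnn : (0 : ℝ) ≤ (ΔT : ℝ) := Nat.cast_nonneg _
  have hq0 : (0 : ℝ) ≤ Real.sqrt m / 2 := by positivity
  -- the collection of "good" partial graphs
  set good : Finset (Fin ℓ × Fin n) → Prop := fun E =>
    (∀ p ∈ E, p ∉ F) ∧ (∀ a, (E.filter (fun p => p.1 = a)).card ≤ s a) ∧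
      (∀ v, (E.filter (fun p => p.2 = v)).card ≤ t v) with hgooddef
  have hgoodEmpty : good ∅ := by
    refine ⟨by simp, fun a => ?_, fun v => ?_⟩ <;> simp
  obtain ⟨E, hEmem, hEmax⟩ := Finset.exists_max_image
    ((Finset.univ : Finset (Fin ℓ × Fin n)).powerset.filter good) Finset.card
    ⟨∅, mem_filter.mpr ⟨mem_powerset.mpr (empty_subset _), hgoodEmpty⟩⟩
  have hEgood : good E := (mem_filter.mp hEmem).2
  obtain ⟨hEF, hEs, hEt⟩ := hEgood
  have hmax : ∀ E' : Finset (Fin ℓ × Fin n), good E' → E'.card ≤ E.card := fun E' hE' =>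
    hEmax E' (mem_filter.mpr ⟨mem_powerset.mpr (subset_univ _), hE'⟩)
  -- fiberwise cardinality identities
  have hfibS : E.card = ∑ a, (E.filter (fun p => p.1 = a)).card :=
    card_eq_sum_card_fiberwise (fun p _ => mem_univ p.1)
  have hfibT : E.card = ∑ v, (E.filter (fun p => p.2 = v)).card :=
    card_eq_sum_card_fiberwise (fun p _ => mem_univ p.2)
  have hEcard_le : E.card ≤ m := by
    rw [hfibS, ← hsm]; exact Finset.sum_le_sum fun a _ => hEs a
  -- main claim : E.card = m
  have hEcard : E.card = m := by
    by_contra hne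
    have hlt : E.card < m := lt_of_le_of_ne hEcard_le hne
    -- a deficient left vertex
    obtain ⟨a, -, ha⟩ : ∃ a ∈ Finset.univ, (E.filter (fun p => p.1 = a)).card < s a := by
      apply exists_lt_of_sum_lt
      rw [← hfibS, hsm]; exact hlt
    -- a deficient right vertex
    obtain ⟨v, -, hv⟩ : ∃ v ∈ Finset.univ, (E.filter (fun p => p.2 = v)).card < t v := by
      apply exists_lt_of_sum_lt
      rw [← hfibT, htm]; exact hlt
    set Ybad : Finset (Fin n) := Finset.univ.filter (fun y => (a, y) ∈ F ∨ (a, y) ∈ E) with hYdef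
    by_cases hcase : ∃ w, (E.filter (fun p => p.2 = w)).card < t w ∧ w ∉ Ybad
    · -- can simply insert an edge
      obtain ⟨w, hw, hwY⟩ := hcase
      simp only [hYdef, mem_filter, mem_univ, true_and, not_or] at hwY
      obtain ⟨hawF, hawE⟩ := hwY
      have hgood' : good (insert (a, w) E) := by
        refine ⟨?_, fun b => ?_, fun u => ?_⟩
        · intro p hp
          rcases Finset.mem_insert.mp hp with rfl | hp
          · exact hawF
          · exact hEF p hp
        · rw [Finset.filter_insert]
          by_cases hb : a = b
          · subst hb
            rw [if_pos rfl,
              Finset.card_insert_of_notMem (fun h => hawE (Finset.mem_filter.mp h).1)]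
            omega
          · rw [if_neg (by simpa using hb)]
            exact hEs b
        · rw [Finset.filter_insert]
          by_cases hu : w = u
          · subst hu
            rw [if_pos rfl,
              Finset.card_insert_of_notMem (fun h => hawE (Finset.mem_filter.mp h).1)]
            omega
          · rw [if_neg (by simpa using hu)]
            exact hEt u
      have := hmax _ hgood'
      rw [Finset.card_insert_of_notMem hawE] at this
      omega
    · push_neg at hcase
      have hdefY : ∀ w, (E.filter (fun p => p.2 = w)).card < t w → w ∈ Ybad := hcase
      -- bound on |Ybad|
      have hYcard : (Ybad.card : ℝ) ≤ C + ΔS := by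
        have hsub : Ybad ⊆ (Finset.univ.filter (fun y => (a, y) ∈ F)) ∪
            (Finset.univ.filter (fun y => (a, y) ∈ E)) := by
          intro y hy
          simp only [hYdef, mem_filter, mem_univ, true_and] at hy
          simp only [mem_union, mem_filter, mem_univ, true_and]
          exact hy
        have h1 : (Finset.univ.filter (fun y => (a, y) ∈ F)).card ≤
            (F.filter (fun p => p.1 = a)).card := by
          apply Finset.card_le_card_of_injOn (fun y => (a, y))
          · intro y hy
            simp only [coe_filter, Set.mem_setOf_eq, mem_coe, mem_filter, mem_univ, true_and] at hy
            exact mem_filter.mpr ⟨hy, rfl⟩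
          · intro y1 _ y2 _ h; exact ((Prod.mk.injEq _ _ _ _).mp h).2
        have h2 : (Finset.univ.filter (fun y => (a, y) ∈ E)).card ≤
            (E.filter (fun p => p.1 = a)).card := by
          apply Finset.card_le_card_of_injOn (fun y => (a, y))
          · intro y hy
            simp only [coe_filter, Set.mem_setOf_eq, mem_coe, mem_filter, mem_univ, true_and] at hy
            exact mem_filter.mpr ⟨hy, rfl⟩
          · intro y1 _ y2 _ h; exact ((Prod.mk.injEq _ _ _ _).mp h).2
        have h3 := Finset.card_union_le (Finset.univ.filter (fun y => (a, y) ∈ F))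
          (Finset.univ.filter (fun y => (a, y) ∈ E))
        have h4 := Finset.card_le_card hsub
        have h6 : (E.filter (fun p => p.1 = a)).card ≤ ΔS := le_trans (hEs a) (hsΔS a)
        have h7 : Ybad.card ≤ (F.filter (fun p => p.1 = a)).card + ΔS := by omega
        have h8 : (Ybad.card : ℝ) ≤ ((F.filter (fun p => p.1 = a)).card : ℝ) + (ΔS : ℝ) := by
          exact_mod_cast h7
        linarith [hFa a]
      -- lower bound on E.card : m ≤ E.card + Ybad.card * ΔT (in ℕ)
      have hlow : m ≤ E.card + Ybad.card * ΔT := by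
        have hsplit : (∑ w, t w) =
            (∑ w ∈ Finset.univ.filter (fun w => w ∈ Ybad), t w) +
              ∑ w ∈ Finset.univ.filter (fun w => w ∉ Ybad), t w :=
          (Finset.sum_filter_add_sum_filter_not Finset.univ (fun w => w ∈ Ybad) t).symm
        have hYeq : Finset.univ.filter (fun w => w ∈ Ybad) = Ybad := by
          ext w; simp
        have h1 : ∑ w ∈ Ybad, t w ≤ Ybad.card * ΔT := by
          have := Finset.sum_le_card_nsmul Ybad t ΔT (fun w _ => htΔT w)
          simpa [smul_eq_mul] using this
        have h2 : ∑ w ∈ Finset.univ.filter (fun w => w ∉ Ybad), t w ≤ E.card := by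
          have heq : ∀ w ∈ Finset.univ.filter (fun w => w ∉ Ybad),
              t w = (E.filter (fun p => p.2 = w)).card := by
            intro w hw
            simp only [mem_filter, mem_univ, true_and] at hw
            have hle := hEt w
            by_contra hne'
            exact hw (hdefY w (lt_of_le_of_ne hle (fun h => hne' h.symm)))
          rw [Finset.sum_congr rfl heq, hfibT]
          exact Finset.sum_le_sum_of_subset (Finset.filter_subset _ _)
        rw [hYeq] at hsplit
        omega
      -- bad-vertex set on the left
      set Xbad : Finset (Fin ℓ) := Finset.univ.filter (fun x => (x, v) ∈ F ∨ (x, v) ∈ E)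
        with hXdef
      have hXcard : (Xbad.card : ℝ) ≤ C + ΔT := by
        have h1 : (Finset.univ.filter (fun x => (x, v) ∈ F)).card ≤
            (F.filter (fun p => p.2 = v)).card := by
          apply Finset.card_le_card_of_injOn (fun x => (x, v))
          · intro x hx
            simp only [coe_filter, Set.mem_setOf_eq, mem_coe, mem_filter, mem_univ, true_and] at hx
            exact mem_filter.mpr ⟨hx, rfl⟩
          · intro x1 _ x2 _ h; exact ((Prod.mk.injEq _ _ _ _).mp h).1
        have h2 : (Finset.univ.filter (fun x => (x, v) ∈ E)).card ≤
            (E.filter (fun p => p.2 = v)).card := by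
          apply Finset.card_le_card_of_injOn (fun x => (x, v))
          · intro x hx
            simp only [coe_filter, Set.mem_setOf_eq, mem_coe, mem_filter, mem_univ, true_and] at hx
            exact mem_filter.mpr ⟨hx, rfl⟩
          · intro x1 _ x2 _ h; exact ((Prod.mk.injEq _ _ _ _).mp h).1
        have hsub : Xbad ⊆ (Finset.univ.filter (fun x => (x, v) ∈ F)) ∪
            (Finset.univ.filter (fun x => (x, v) ∈ E)) := by
          intro x hx
          simp only [hXdef, mem_filter, mem_univ, true_and] at hx
          simp only [mem_union, mem_filter, mem_univ, true_and]
          exact hx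
        have h3 := Finset.card_union_le (Finset.univ.filter (fun x => (x, v) ∈ F))
          (Finset.univ.filter (fun x => (x, v) ∈ E))
        have h4 := Finset.card_le_card hsub
        have h6 : (E.filter (fun p => p.2 = v)).card ≤ ΔT := le_trans (hEt v) (htΔT v)
        have h7 : Xbad.card ≤ (F.filter (fun p => p.2 = v)).card + ΔT := by omega
        have h8 : (Xbad.card : ℝ) ≤ ((F.filter (fun p => p.2 = v)).card : ℝ) + (ΔT : ℝ) := by
          exact_mod_cast h7
        linarith [hFv v]
      -- bounds on the number of edges meeting a bad vertex
      have hEY : (E.filter (fun p => p.2 ∈ Ybad)).card ≤ Ybad.card * ΔT := by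
        have hfib : (E.filter (fun p => p.2 ∈ Ybad)).card =
            ∑ y ∈ Ybad, ((E.filter (fun p => p.2 ∈ Ybad)).filter (fun p => p.2 = y)).card :=
          card_eq_sum_card_fiberwise (fun p hp => (mem_filter.mp hp).2)
        rw [hfib]
        have hb : ∀ y ∈ Ybad,
            ((E.filter (fun p => p.2 ∈ Ybad)).filter (fun p => p.2 = y)).card ≤ ΔT := by
          intro y _
          refine le_trans (le_trans (Finset.card_le_card ?_) (hEt y)) (htΔT y)
          intro p hp
          simp only [mem_filter] at hp ⊢
          exact ⟨hp.1.1, hp.2⟩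
        have := Finset.sum_le_card_nsmul Ybad _ ΔT hb
        simpa [smul_eq_mul] using this
      have hEX : (E.filter (fun p => p.1 ∈ Xbad)).card ≤ Xbad.card * ΔS := by
        have hfib : (E.filter (fun p => p.1 ∈ Xbad)).card =
            ∑ x ∈ Xbad, ((E.filter (fun p => p.1 ∈ Xbad)).filter (fun p => p.1 = x)).card :=
          card_eq_sum_card_fiberwise (fun p hp => (mem_filter.mp hp).2)
        rw [hfib]
        have hb : ∀ x ∈ Xbad,
            ((E.filter (fun p => p.1 ∈ Xbad)).filter (fun p => p.1 = x)).card ≤ ΔS := by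
          intro x _
          refine le_trans (le_trans (Finset.card_le_card ?_) (hEs x)) (hsΔS x)
          intro p hp
          simp only [mem_filter] at hp ⊢
          exact ⟨hp.1.1, hp.2⟩
        have := Finset.sum_le_card_nsmul Xbad _ ΔS hb
        simpa [smul_eq_mul] using this
      -- there is a "good" edge to switch with
      have hgoodedge : ∃ p ∈ E, p.2 ∉ Ybad ∧ p.1 ∉ Xbad := by
        by_contra hno
        push_neg at hno
        have hsub : E ⊆ E.filter (fun p => p.2 ∈ Ybad) ∪ E.filter (fun p => p.1 ∈ Xbad) := by
          intro p hp
          by_cases hy : p.2 ∈ Ybad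
          · exact mem_union_left _ (mem_filter.mpr ⟨hp, hy⟩)
          · exact mem_union_right _ (mem_filter.mpr ⟨hp, hno p hp hy⟩)
        have hEle : E.card ≤ Ybad.card * ΔT + Xbad.card * ΔS :=
          le_trans (Finset.card_le_card hsub)
            (le_trans (Finset.card_union_le _ _) (Nat.add_le_add hEY hEX))
        have c1 : (m : ℝ) ≤ (E.card : ℝ) + (Ybad.card : ℝ) * (ΔT : ℝ) := by exact_mod_cast hlow
        have c2 : (E.card : ℝ) ≤ (Ybad.card : ℝ) * (ΔT : ℝ) + (Xbad.card : ℝ) * (ΔS : ℝ) := by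
          exact_mod_cast hEle
        have hYnn : (0 : ℝ) ≤ (Ybad.card : ℝ) := Nat.cast_nonneg _
        have hXnn : (0 : ℝ) ≤ (Xbad.card : ℝ) := Nat.cast_nonneg _
        have e1 : (Ybad.card : ℝ) * (ΔT : ℝ) ≤ (Real.sqrt m / 2) * (Real.sqrt m / 2 - C) := by
          apply mul_le_mul (by linarith) (by linarith) hTnn hq0
        have e2 : (Xbad.card : ℝ) * (ΔS : ℝ) ≤ (Real.sqrt m / 2) * (Real.sqrt m / 2 - C) := by
          apply mul_le_mul (by linarith) (by linarith) hSnn hq0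
        have hm0' : (0 : ℝ) < m := by exact_mod_cast hm0
        nlinarith [hq0, hC]
      obtain ⟨p, hpE, hpY, hpX⟩ := hgoodedge
      obtain ⟨x, y⟩ := p
      simp only [hYdef, mem_filter, mem_univ, true_and, not_or] at hpY
      simp only [hXdef, mem_filter, mem_univ, true_and, not_or] at hpX
      obtain ⟨hayF, hayE⟩ := hpY
      obtain ⟨hxvF, hxvE⟩ := hpX
      have hax : a ≠ x := fun h => hayE (by rw [h]; exact hpE)
      have hvy : v ≠ y := fun h => hxvE (by rw [h]; exact hpE)
      set E' := insert (a, y) (insert (x, v) (E.erase (x, y))) with hE'def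
      have h1 : (x, v) ∉ E.erase (x, y) := fun h => hxvE (Finset.mem_of_mem_erase h)
      have h2 : (a, y) ∉ insert (x, v) (E.erase (x, y)) := by
        intro h
        rcases Finset.mem_insert.mp h with h | h
        · exact hax (congrArg Prod.fst h)
        · exact hayE (Finset.mem_of_mem_erase h)
      have hcard' : E'.card = E.card + 1 := by
        rw [hE'def, Finset.card_insert_of_notMem h2, Finset.card_insert_of_notMem h1,
          Finset.card_erase_of_mem hpE]
        have hpos : 1 ≤ E.card := Finset.card_pos.mpr ⟨_, hpE⟩
        omega
      have hgood' : good E' := by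
        refine ⟨?_, fun b => ?_, fun u => ?_⟩
        · intro p hp
          rw [hE'def] at hp
          rcases Finset.mem_insert.mp hp with rfl | hp
          · exact hayF
          rcases Finset.mem_insert.mp hp with rfl | hp
          · exact hxvF
          · exact hEF p (Finset.mem_of_mem_erase hp)
        · rw [hE'def, Finset.filter_insert, Finset.filter_insert, Finset.filter_erase]
          by_cases hb1 : a = b
          · subst hb1
            rw [if_pos rfl, if_neg (show ¬((x, v).1 = a) from fun h => hax h.symm),
              Finset.erase_eq_of_notMem
                (fun h => hax ((Finset.mem_filter.mp h).2).symm),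
              Finset.card_insert_of_notMem (fun h => hayE (Finset.mem_filter.mp h).1)]
            omega
          · rw [if_neg (show ¬((a, y).1 = b) from hb1)]
            by_cases hb2 : x = b
            · subst hb2
              have hm' : (x, y) ∈ E.filter (fun p => p.1 = x) :=
                Finset.mem_filter.mpr ⟨hpE, rfl⟩
              rw [if_pos rfl,
                Finset.card_insert_of_notMem
                  (fun h => hxvE (Finset.mem_filter.mp (Finset.mem_of_mem_erase h)).1),
                Finset.card_erase_of_mem hm']
              have hpos : 1 ≤ (E.filter (fun p => p.1 = x)).card :=
                Finset.card_pos.mpr ⟨_, hm'⟩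
              have := hEs x
              omega
            · rw [if_neg (show ¬((x, v).1 = b) from hb2),
                Finset.erase_eq_of_notMem
                  (show (x, y) ∉ E.filter (fun p => p.1 = b) from
                    fun h => hb2 (Finset.mem_filter.mp h).2)]
              exact hEs b
        · rw [hE'def, Finset.filter_insert, Finset.filter_insert, Finset.filter_erase]
          by_cases hu1 : y = u
          · subst hu1
            have hm' : (x, y) ∈ E.filter (fun p => p.2 = y) :=
              Finset.mem_filter.mpr ⟨hpE, rfl⟩
            rw [if_neg (show ¬((x, v).2 = y) from hvy), if_pos rfl,
              Finset.card_insert_of_notMem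
                (fun h => hayE (Finset.mem_filter.mp (Finset.mem_of_mem_erase h)).1),
              Finset.card_erase_of_mem hm']
            have hpos : 1 ≤ (E.filter (fun p => p.2 = y)).card :=
              Finset.card_pos.mpr ⟨_, hm'⟩
            have := hEt y
            omega
          · rw [if_neg (show ¬((a, y).2 = u) from hu1)]
            by_cases hu2 : v = u
            · subst hu2
              rw [if_pos rfl,
                Finset.erase_eq_of_notMem
                  (fun h => hvy ((Finset.mem_filter.mp h).2).symm),
                Finset.card_insert_of_notMem (fun h => hxvE (Finset.mem_filter.mp h).1)]
              omega
            · rw [if_neg (show ¬((x, v).2 = u) from hu2),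
                Finset.erase_eq_of_notMem
                  (show (x, y) ∉ E.filter (fun p => p.2 = u) from
                    fun h => hu1 (Finset.mem_filter.mp h).2)]
              exact hEt u
      have := hmax E' hgood'
      omega
  -- conclude : degrees are exact
  refine ⟨E, hEF, ?_, ?_⟩
  · have hsum : ∑ a, (E.filter (fun p => p.1 = a)).card = ∑ a, s a := by
      rw [← hfibS, hEcard, hsm]
    exact fun a => (Finset.sum_eq_sum_iff_of_le (fun a _ => hEs a)).mp hsum a (mem_univ a)
  · have hsum : ∑ v, (E.filter (fun p => p.2 = v)).card = ∑ v, t v := by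
      rw [← hfibT, hEcard, htm]
    exact fun v => (Finset.sum_eq_sum_iff_of_le (fun v _ => hEt v)).mp hsum v (mem_univ v)
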